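/- For every x ∈ ℝ^{P(F)} and every G ⊆ F: Σ_{A,B,B' ⊆ F} μ_{A,B}(x) D(A,G,B,B') = γ Σ_{B : G ⊄ B} (x^B/(|B\G| + 1)) · Σ_{g ∈ G∩B} x^{G\{g}}. -/

import Mathlib

open Finset

/-- Swap rate `μ_{A,B}(x)`: nonzero only when `A ≁ B` (neither contains the other). -/
noncomputable def mu {ι : Type*} [DecidableEq ι]
    (γ : ℝ) (x : Finset ι → ℝ) (A B : Finset ι) : ℝ :=
  if ¬ A ⊆ B ∧ ¬ B ⊆ A then
    γ * x A * x B / (((A \ B).card : ℝ) * ((B \ A).card : ℝ))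
  else 0

/-- The indicator `D(A,A',B,B') = 1(A ⊏ A', A'\A ⊆ B, B ⊏ B', B'\B ⊆ A)`. -/
def Dind {ι : Type*} [DecidableEq ι] (A A' B B' : Finset ι) : ℝ :=
  if A ⊆ A' ∧ (A' \ A).card = 1 ∧ A' \ A ⊆ B ∧ B ⊆ B' ∧ (B' \ B).card = 1 ∧ B' \ B ⊆ A
  then 1 else 0

section aux
variable {ι : Type*} [Fintype ι] [DecidableEq ι]

lemma filter_insert_eq_image (A B : Finset ι) :
    univ.filter (fun B' : Finset ι => B ⊆ B' ∧ (B' \ B).card = 1 ∧ B' \ B ⊆ A)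
      = (A \ B).image (fun b => insert b B) := by
  ext B'
  simp only [mem_filter, mem_univ, true_and, mem_image, mem_sdiff]
  constructor
  · rintro ⟨hBB', hcard, hsub⟩
    obtain ⟨b, hb⟩ := Finset.card_eq_one.mp hcard
    have hbmem : b ∈ B' \ B := hb ▸ mem_singleton_self b
    rw [mem_sdiff] at hbmem
    refine ⟨b, ⟨hsub (hb ▸ mem_singleton_self b), hbmem.2⟩, ?_⟩
    apply Finset.Subset.antisymm
    · exact insert_subset hbmem.1 hBB'
    · intro y hy
      by_cases hyB : y ∈ B
      · exact mem_insert_of_mem hyB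
      · have : y ∈ B' \ B := mem_sdiff.mpr ⟨hy, hyB⟩
        rw [hb, mem_singleton] at this
        subst this; exact mem_insert_self _ _
  · rintro ⟨b, ⟨hbA, hbB⟩, rfl⟩
    rw [insert_sdiff_cancel hbB]
    exact ⟨subset_insert _ _, card_singleton b,
      singleton_subset_iff.mpr hbA⟩

lemma sum_Dind (A G B : Finset ι) :
    ∑ B' : Finset ι, Dind A G B B'
      = if A ⊆ G ∧ (G \ A).card = 1 ∧ G \ A ⊆ B then ((A \ B).card : ℝ) else 0 := by
  unfold Dind
  by_cases h : A ⊆ G ∧ (G \ A).card = 1 ∧ G \ A ⊆ B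
  · rw [if_pos h]
    obtain ⟨h1, h2, h3⟩ := h
    have : ∀ B' : Finset ι,
        (if A ⊆ G ∧ (G \ A).card = 1 ∧ G \ A ⊆ B ∧ B ⊆ B' ∧ (B' \ B).card = 1 ∧ B' \ B ⊆ A
          then (1:ℝ) else 0)
        = if B ⊆ B' ∧ (B' \ B).card = 1 ∧ B' \ B ⊆ A then (1:ℝ) else 0 := by
      intro B'
      congr 1
      simp [h1, h2, h3, and_assoc]
    simp only [this]
    rw [Finset.sum_boole]
    rw [filter_insert_eq_image A B]
    rw [Finset.card_image_of_injOn]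
    intro b1 hb1 b2 hb2 heq
    simp only [coe_sdiff, Set.mem_diff, mem_coe] at hb1 hb2
    have heq' : insert b1 B = insert b2 B := heq
    have : b1 ∈ insert b2 B := heq' ▸ mem_insert_self b1 B
    rcases mem_insert.mp this with h' | h'
    · exact h'
    · exact absurd h' hb1.2
  · rw [if_neg h]
    apply Finset.sum_eq_zero
    intro B' _
    rw [if_neg]
    rintro ⟨h1, h2, h3, -⟩
    exact h ⟨h1, h2, h3⟩

lemma filter_A_eq_image (G B : Finset ι) :
    univ.filter (fun A : Finset ι => A ⊆ G ∧ (G \ A).card = 1 ∧ G \ A ⊆ B)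
      = (G ∩ B).image (fun g => G.erase g) := by
  ext A
  simp only [mem_filter, mem_univ, true_and, mem_image, mem_inter]
  constructor
  · rintro ⟨h1, h2, h3⟩
    obtain ⟨g, hg⟩ := Finset.card_eq_one.mp h2
    have hgmem : g ∈ G \ A := hg ▸ mem_singleton_self g
    rw [mem_sdiff] at hgmem
    refine ⟨g, ⟨hgmem.1, h3 (hg ▸ mem_singleton_self g)⟩, ?_⟩
    rw [erase_eq, ← hg, Finset.sdiff_sdiff_eq_self h1]
  · rintro ⟨g, ⟨hgG, hgB⟩, rfl⟩
    rw [sdiff_erase_self hgG]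
    exact ⟨erase_subset _ _, card_singleton g, singleton_subset_iff.mpr hgB⟩

end aux

/-- `Σ_{A,B,B'} μ_{A,B}(x) D(A,G,B,B') = γ Σ_{B : G ⊄ B} (x^B/(|B\G|+1)) Σ_{g ∈ G∩B} x^{G\{g}}`. -/
theorem sum_mu_into
    {ι : Type*} [Fintype ι] [Nonempty ι] [DecidableEq ι]
    (γ : ℝ) (hγ : 0 ≤ γ) (x : Finset ι → ℝ) (G : Finset ι) :
    ∑ A : Finset ι, ∑ B : Finset ι, ∑ B' : Finset ι, mu γ x A B * Dind A G B B'
      = γ * ∑ B ∈ univ.filter (fun B => ¬ G ⊆ B),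
          (x B / (((B \ G).card : ℝ) + 1)) * ∑ g ∈ G ∩ B, x (G.erase g) := by
  rw [Finset.sum_comm, Finset.sum_filter, Finset.mul_sum]
  refine Finset.sum_congr rfl fun B _ => ?_
  have step1 : ∀ A : Finset ι, ∑ B' : Finset ι, mu γ x A B * Dind A G B B'
      = if A ⊆ G ∧ (G \ A).card = 1 ∧ G \ A ⊆ B
          then mu γ x A B * ((A \ B).card : ℝ) else 0 := by
    intro A
    rw [← Finset.mul_sum, sum_Dind]
    split <;> simp
  simp only [step1]
  rw [← Finset.sum_filter, filter_A_eq_image G B, Finset.sum_image (by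
    intro g1 hg1 g2 hg2 heq
    by_contra hne
    exact (Finset.mem_erase.mp ((show G.erase g1 = G.erase g2 from heq) ▸ Finset.mem_erase_of_ne_of_mem hne
      (Finset.mem_inter.mp hg1).1)).1 rfl)]
  by_cases hGB : G ⊆ B
  · rw [if_neg (not_not_intro hGB), mul_zero]
    apply Finset.sum_eq_zero
    intro g hg
    have : G.erase g \ B = ∅ := by
      rw [Finset.sdiff_eq_empty_iff_subset]
      exact (erase_subset _ _).trans hGB
    rw [this]
    simp
  · rw [if_pos hGB]
    have hterm : ∀ g ∈ G ∩ B,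
        mu γ x (G.erase g) B * ((G.erase g \ B).card : ℝ)
          = γ * (x B / (((B \ G).card : ℝ) + 1)) * x (G.erase g) := by
      intro g hg
      rw [mem_inter] at hg
      obtain ⟨a, haG, haB⟩ := Finset.not_subset.mp hGB
      have hne : a ≠ g := fun h => haB (h ▸ hg.2)
      have hnAB : ¬ G.erase g ⊆ B := fun h => haB (h (mem_erase.mpr ⟨hne, haG⟩))
      have hnBA : ¬ B ⊆ G.erase g := fun h => (mem_erase.mp (h hg.2)).1 rfl
      have hBA : B \ G.erase g = insert g (B \ G) := Finset.sdiff_erase hg.2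
      have hgnot : g ∉ B \ G := fun h => (mem_sdiff.mp h).2 hg.1
      have hcardBA : ((B \ G.erase g).card : ℝ) = ((B \ G).card : ℝ) + 1 := by
        rw [hBA, Finset.card_insert_of_notMem hgnot]
        push_cast; ring
      have hAB0 : ((G.erase g \ B).card : ℝ) ≠ 0 := by
        have : a ∈ G.erase g \ B := mem_sdiff.mpr ⟨mem_erase.mpr ⟨hne, haG⟩, haB⟩
        simp only [ne_eq, Nat.cast_eq_zero, Finset.card_eq_zero]
        exact fun h => by simp [h] at this
      have hBA0 : ((B \ G).card : ℝ) + 1 ≠ 0 := by positivity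
      rw [mu, if_pos ⟨hnAB, hnBA⟩, hcardBA]
      field_simp
    rw [Finset.sum_congr rfl hterm]
    simp only [Finset.mul_sum, mul_assoc]
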